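/- arXiv:2012.10104 — 2 statements merged into one kernel-verified Lean document; each statement's English description precedes it below -/
import Mathlib

section
/- Let V and W be local operator systems and let τ = {T_γ^n} be any local operator system tensor product structure on V ⊗ W. If φ : V → M_n(ℂ) and ψ : W → M_m(ℂ) are local completely positive (not necessarily unital) maps with respect to cones C_α and D_β respectively, then φ ⊗ ψ : V ⊗_τ W → M_{nm}(ℂ) is local completely positive with respect to T_{(α,β)}. -/
open scoped ComplexOrder

noncomputable section

variable {V : Type} [AddCommGroup V] [Module ℂ V]

/-- Conjugation `Xᴴ A X` of a `V`-valued matrix by a scalar matrix `X`. -/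
def sconj {n m : ℕ} (X : Matrix (Fin n) (Fin m) ℂ)
    (A : Matrix (Fin n) (Fin n) V) : Matrix (Fin m) (Fin m) V :=
  Matrix.of fun i j => ∑ p, ∑ q, ((starRingEnd ℂ) (X p i) * X q j) • A p q

/-- A (not necessarily proper) cone in a complex vector space. -/
def IsVCone {M : Type} [AddCommGroup M] [Module ℂ M] (C : Set M) : Prop :=
  (0 : M) ∈ C ∧ (∀ x ∈ C, ∀ y ∈ C, x + y ∈ C) ∧
    ∀ r : ℝ, 0 ≤ r → ∀ x ∈ C, (r : ℂ) • x ∈ C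

/-- A 2×2 block matrix of `n × n` blocks, reindexed to `Fin (n+n)`. -/
def blk {n : ℕ} (A B C D : Matrix (Fin n) (Fin n) V) :
    Matrix (Fin (n + n)) (Fin (n + n)) V :=
  Matrix.reindex finSumFinEquiv finSumFinEquiv (Matrix.fromBlocks A B C D)

/-- The diagonal matrix `diag (e, …, e)`. -/
def diagE (e : V) (n : ℕ) : Matrix (Fin n) (Fin n) V :=
  Matrix.diagonal fun _ => e

variable [StarAddMonoid V] [StarModule ℂ V]

/-- The seminorm at level `(α, n)` induced by the matrix cones `C` and the unit `e`:
`‖X‖_α^n = inf { r ≥ 0 : [[r eₙ, X],[X*, r eₙ]] ∈ C_α^{2n} }`. -/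
def nrm {Γ : Type} (C : Γ → (k : ℕ) → Set (Matrix (Fin k) (Fin k) V)) (e : V)
    (α : Γ) (n : ℕ) (X : Matrix (Fin n) (Fin n) V) : ℝ :=
  sInf {r : ℝ | 0 ≤ r ∧
    blk ((r : ℂ) • diagE e n) X (star X) ((r : ℂ) • diagE e n) ∈ C α (n + n)}

/-- A local matrix *-ordering on `V`: a downward filtered family of compatible matrix
cones of hermitian matrices whose total intersection with their negatives is trivial. -/
structure LMOrder (Γ : Type) (V : Type) [AddCommGroup V] [Module ℂ V]
    [StarAddMonoid V] [StarModule ℂ V] where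
  C : Γ → (n : ℕ) → Set (Matrix (Fin n) (Fin n) V)
  cone : ∀ α n, IsVCone (C α n)
  herm : ∀ α n, ∀ A ∈ C α n, star A = A
  filtered : ∀ α β : Γ, ∃ γ, ∀ n, C γ n ⊆ C α n ∩ C β n
  proper : ∀ n (A : Matrix (Fin n) (Fin n) V), (∀ α, A ∈ C α n ∧ -A ∈ C α n) → A = 0
  compat : ∀ (α : Γ) (n m : ℕ) (X : Matrix (Fin n) (Fin m) ℂ),
    ∀ A ∈ C α n, sconj X A ∈ C α m

/-- An abstract local operator system: a local matrix *-ordering together with an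
Archimedean matrix order unit. -/
structure LocalOpSys (Γ : Type) (V : Type) [AddCommGroup V] [Module ℂ V]
    [StarAddMonoid V] [StarModule ℂ V] extends LMOrder Γ V where
  e : V
  eherm : star e = e
  unit : ∀ (α : Γ) (n : ℕ) (A : Matrix (Fin n) (Fin n) V), star A = A →
    ∃ r : ℝ, 0 < r ∧ (r : ℂ) • diagE e n - A ∈ C α n
  arch : ∀ (α : Γ) (n : ℕ) (A : Matrix (Fin n) (Fin n) V),
    (∀ r : ℝ, 0 < r → (r : ℂ) • diagE e n + A ∈ C α n) → A ∈ C α n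

/-- An Archimedean local order unit space (`A.L.O.U.` space): ground-level cones only. -/
structure ALOU (Γ : Type) (V : Type) [AddCommGroup V] [Module ℂ V]
    [StarAddMonoid V] [StarModule ℂ V] where
  pos : Γ → Set V
  cone : ∀ α, IsVCone (pos α)
  herm : ∀ α, ∀ v ∈ pos α, star v = v
  filtered : ∀ α β : Γ, ∃ γ, pos γ ⊆ pos α ∩ pos β
  proper : ∀ v : V, (∀ α, v ∈ pos α ∧ -v ∈ pos α) → v = 0
  e : V
  eherm : star e = e
  unit : ∀ (α : Γ) (v : V), star v = v → ∃ r : ℝ, 0 < r ∧ (r : ℂ) • e - v ∈ pos α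
  arch : ∀ (α : Γ) (v : V), (∀ r : ℝ, 0 < r → (r : ℂ) • e + v ∈ pos α) → v ∈ pos α

/-- The minimal matrix cones over a family of ground-level cones. -/
def Cmin {Γ : Type} (pos : Γ → Set V) (α : Γ) (n : ℕ) :
    Set (Matrix (Fin n) (Fin n) V) :=
  {A | ∀ L : Fin n → ℂ, (∑ i, ∑ j, ((starRingEnd ℂ) (L i) * L j) • A i j) ∈ pos α}

/-- The maximal matrix cones over a family of ground-level cones:
sums `Σ aᵢ ⊗ vᵢ` with `aᵢ` positive semidefinite scalar matrices and `vᵢ` positive. -/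
def Dmax {Γ : Type} (pos : Γ → Set V) (α : Γ) (n : ℕ) :
    Set (Matrix (Fin n) (Fin n) V) :=
  {A | ∃ (k : ℕ) (a : Fin k → Matrix (Fin n) (Fin n) ℂ) (v : Fin k → V),
    (∀ i, (a i).PosSemidef) ∧ (∀ i, v i ∈ pos α) ∧
    A = Matrix.of fun p q => ∑ i, (a i p q) • v i}

/-- The amplification `φ⁽ᵏ⁾` of a matrix-valued linear map, realized on the index
type `Fin k × ι`. -/
def ampP {S : Type} [AddCommGroup S] [Module ℂ S] {k : ℕ} {ι : Type} [Fintype ι]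
    (φ : S →ₗ[ℂ] Matrix ι ι ℂ) (M : Matrix (Fin k) (Fin k) S) :
    Matrix (Fin k × ι) (Fin k × ι) ℂ :=
  Matrix.of fun ip jq => φ (M ip.1 jq.1) ip.2 jq.2

end

open scoped TensorProduct

/-- The Kronecker bilinear map `M_n(ℂ) × M_m(ℂ) → M_{nm}(ℂ)`. -/
noncomputable def entryBil (n m : ℕ) : Matrix (Fin n) (Fin n) ℂ →ₗ[ℂ] Matrix (Fin m) (Fin m) ℂ →ₗ[ℂ]
    Matrix (Fin n × Fin m) (Fin n × Fin m) ℂ :=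
  LinearMap.mk₂ ℂ (fun a b => Matrix.of fun p q => a p.1 q.1 * b p.2 q.2)
    (fun a a' b => by ext p q; simp [Matrix.add_apply, add_mul])
    (fun c a b => by ext p q; simp [Matrix.smul_apply, smul_eq_mul]; ring)
    (fun a b b' => by ext p q; simp [Matrix.add_apply, mul_add])
    (fun c a b => by ext p q; simp [Matrix.smul_apply, smul_eq_mul]; ring)

/-- The linearization `φ ⊗ ψ : V ⊗ W → M_{nm}(ℂ)` of two matrix-valued maps. -/
noncomputable def tpmap {V W : Type} [AddCommGroup V] [Module ℂ V] [AddCommGroup W] [Module ℂ W]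
    {n m : ℕ} (φ : V →ₗ[ℂ] Matrix (Fin n) (Fin n) ℂ)
    (ψ : W →ₗ[ℂ] Matrix (Fin m) (Fin m) ℂ) :
    (V ⊗[ℂ] W) →ₗ[ℂ] Matrix (Fin n × Fin m) (Fin n × Fin m) ℂ :=
  TensorProduct.lift (((entryBil n m).comp φ).compl₂ ψ)

/-- The Kronecker tensor of a `V`-matrix and a `W`-matrix. -/
noncomputable def kron {V W : Type} [AddCommGroup V] [Module ℂ V] [AddCommGroup W] [Module ℂ W]
    {k l : ℕ} (P : Matrix (Fin k) (Fin k) V) (Q : Matrix (Fin l) (Fin l) W) :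
    Matrix (Fin (k * l)) (Fin (k * l)) (V ⊗[ℂ] W) :=
  Matrix.reindex finProdFinEquiv finProdFinEquiv
    (Matrix.of fun (p q : Fin k × Fin l) => P p.1 q.1 ⊗ₜ[ℂ] Q p.2 q.2)

open scoped ComplexOrder
open Matrix

variable {ι : Type} [Fintype ι] [DecidableEq ι]

private lemma quad_key (M : Matrix ι ι ℂ)
    (h : ∀ x : ι → ℂ, (starRingEnd ℂ) (star x ⬝ᵥ M *ᵥ x) = star x ⬝ᵥ M *ᵥ x) :
    ∀ x y : ι → ℂ, star y ⬝ᵥ M *ᵥ x = (starRingEnd ℂ) (star x ⬝ᵥ M *ᵥ y) := by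
  have hadd : ∀ x y z : ι → ℂ, star (x + y) ⬝ᵥ M *ᵥ z
      = star x ⬝ᵥ M *ᵥ z + star y ⬝ᵥ M *ᵥ z := by
    intro x y z; simp [star_add, add_dotProduct]
  have haddr : ∀ x y z : ι → ℂ, star z ⬝ᵥ M *ᵥ (x + y)
      = star z ⬝ᵥ M *ᵥ x + star z ⬝ᵥ M *ᵥ y := by
    intro x y z; simp [mulVec_add, dotProduct_add]
  have hsl : ∀ (c : ℂ) (x z : ι → ℂ), star (c • x) ⬝ᵥ M *ᵥ z
      = (starRingEnd ℂ) c * (star x ⬝ᵥ M *ᵥ z) := by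
    intro c x z; simp [star_smul, smul_dotProduct, smul_eq_mul]
  have hsr : ∀ (c : ℂ) (x z : ι → ℂ), star z ⬝ᵥ M *ᵥ (c • x)
      = c * (star z ⬝ᵥ M *ᵥ x) := by
    intro c x z; simp [mulVec_smul, dotProduct_smul, smul_eq_mul]
  intro x y
  have h1 := h (x + y)
  have h2 := h (x + Complex.I • y)
  have hx := h x
  have hy := h y
  simp only [hadd, haddr, hsl, hsr, map_add, RingHom.map_mul, Complex.conj_I] at h1 h2
  set u := star x ⬝ᵥ M *ᵥ y with hu
  set v := star y ⬝ᵥ M *ᵥ x with hv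
  set a := star x ⬝ᵥ M *ᵥ x
  set b := star y ⬝ᵥ M *ᵥ y
  simp only [Complex.ext_iff, Complex.add_re, Complex.add_im, Complex.mul_re, Complex.mul_im,
    Complex.conj_re, Complex.conj_im, Complex.I_re, Complex.I_im, Complex.neg_re,
    Complex.neg_im] at h1 h2 hx hy ⊢
  obtain ⟨h1r, h1i⟩ := h1
  obtain ⟨h2r, h2i⟩ := h2
  constructor <;> nlinarith [hx.1, hx.2, hy.1, hy.2, h1r, h1i, h2r, h2i]

private lemma dot_single (M : Matrix ι ι ℂ) (i j : ι) :
    star (Pi.single j 1 : ι → ℂ) ⬝ᵥ M *ᵥ (Pi.single i 1 : ι → ℂ) = M j i := by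
  simp [dotProduct, Matrix.mulVec_single, Pi.star_apply, Pi.single_apply, apply_ite,
    ite_mul, mul_ite, Finset.sum_ite_eq]

private lemma herm_of_quad {M : Matrix ι ι ℂ}
    (h : ∀ x : ι → ℂ, (starRingEnd ℂ) (star x ⬝ᵥ M *ᵥ x) = star x ⬝ᵥ M *ᵥ x) :
    M.IsHermitian := by
  have key := quad_key M h
  ext i j
  have := key (Pi.single i 1) (Pi.single j 1)
  rw [dot_single, dot_single] at this
  simp only [conjTranspose_apply, Complex.star_def]
  rw [this, Complex.conj_conj]

private lemma psd_of_dot {M : Matrix ι ι ℂ} (h : ∀ x, 0 ≤ star x ⬝ᵥ M *ᵥ x) :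
    M.PosSemidef := by
  refine Matrix.PosSemidef.of_dotProduct_mulVec_nonneg (herm_of_quad fun x => ?_) h
  have := h x
  rw [Complex.nonneg_iff] at this
  exact Complex.conj_eq_iff_im.2 this.2.symm

private lemma zero_of_quad {M : Matrix ι ι ℂ}
    (h : ∀ x : ι → ℂ, star x ⬝ᵥ M *ᵥ x = 0) : M = 0 := by
  have key := quad_key M (fun x => by rw [h x]; simp)
  have herm := herm_of_quad (M := M) (fun x => by rw [h x]; simp)
  -- use h on x+y : B x y + B y x = 0 and hermitian-ness
  have hadd : ∀ x y : ι → ℂ, star x ⬝ᵥ M *ᵥ y + star y ⬝ᵥ M *ᵥ x = 0 := by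
    intro x y
    have := h (x + y)
    simp only [star_add, add_dotProduct, mulVec_add, dotProduct_add, h x, h y] at this
    linear_combination this
  ext i j
  have h1 := hadd (Pi.single i 1) (Pi.single j 1)
  have h2 := hadd (Pi.single i 1) (Complex.I • (Pi.single j 1 : ι → ℂ))
  simp only [mulVec_smul, dotProduct_smul, star_smul, smul_dotProduct, smul_eq_mul,
    Complex.star_def, Complex.conj_I] at h2
  set u := star (Pi.single i 1 : ι → ℂ) ⬝ᵥ M *ᵥ (Pi.single j 1) with hu
  set v := star (Pi.single j 1 : ι → ℂ) ⬝ᵥ M *ᵥ (Pi.single i 1) with hv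
  have h2' : Complex.I * u + -Complex.I * v = 0 := by linear_combination h2
  have huz : u = 0 := by
    have := mul_eq_zero.mp (by linear_combination Complex.I * h1 + h2' : Complex.I * (2 * u) = 0)
    rcases this with hI | h0
    · exact absurd hI Complex.I_ne_zero
    · linear_combination h0 / 2
  have hMu : M i j = u := by rw [hu, dot_single]
  simp [hMu, huz]

private lemma psd_neg_zero {M : Matrix ι ι ℂ} (h1 : M.PosSemidef) (h2 : (-M).PosSemidef) :
    M = 0 := by
  apply zero_of_quad
  intro x
  have a1 := h1.dotProduct_mulVec_nonneg x
  have a2 := h2.dotProduct_mulVec_nonneg x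
  rw [neg_mulVec, dotProduct_neg] at a2
  exact le_antisymm (neg_nonneg.mp a2) a1

open scoped MatrixOrder in
private lemma psd_trace_zero {M : Matrix ι ι ℂ} (h : M.PosSemidef) (ht : M.trace = 0) :
    M = 0 := by
  obtain ⟨B, rfl⟩ : ∃ B : Matrix ι ι ℂ, M = Bᴴ * B := ⟨CFC.sqrt M, by
    rw [show (CFC.sqrt M)ᴴ = CFC.sqrt M from (CFC.sqrt_nonneg M).posSemidef.1,
      CFC.sqrt_mul_sqrt_self M h.nonneg]⟩
  have : ∀ i j, B i j = 0 := by
    have htr : (Bᴴ * B).trace = ∑ j, ∑ i, (starRingEnd ℂ) (B i j) * B i j := by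
      simp [Matrix.trace, Matrix.diag, Matrix.mul_apply, conjTranspose_apply]
    rw [htr] at ht
    intro i j
    have hnn : ∀ j ∈ Finset.univ, (0:ℝ) ≤ ∑ i, Complex.normSq (B i j) := fun j _ =>
      Finset.sum_nonneg fun i _ => Complex.normSq_nonneg _
    have : ∀ p q : ι, (starRingEnd ℂ) (B p q) * B p q = (Complex.normSq (B p q) : ℂ) := by
      intro p q; rw [Complex.normSq_eq_conj_mul_self]
    simp only [this] at ht
    have : (((∑ j, ∑ i, Complex.normSq (B i j)) : ℝ) : ℂ) = 0 := by
      push_cast; exact_mod_cast ht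
    have hsum : (∑ j, ∑ i, Complex.normSq (B i j)) = 0 := by exact_mod_cast this
    have h1 := (Finset.sum_eq_zero_iff_of_nonneg hnn).mp hsum j (Finset.mem_univ j)
    have h2 := (Finset.sum_eq_zero_iff_of_nonneg
      (fun i _ => Complex.normSq_nonneg (B i j))).mp h1 i (Finset.mem_univ i)
    exact Complex.normSq_eq_zero.mp h2
  have hB : B = 0 := by ext i j; exact this i j
  simp [hB]
open scoped ComplexOrder
open Matrix
variable {ι : Type} [Fintype ι] [DecidableEq ι]

private lemma psd_limit {N F H : Matrix ι ι ℂ}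
    (h : ∀ t : ℝ, 0 < t →
      ∀ x, 0 ≤ star x ⬝ᵥ (N + (t:ℂ) • F + ((t:ℂ)^2) • H) *ᵥ x) :
    ∀ x, 0 ≤ star x ⬝ᵥ N *ᵥ x := by
  intro x
  set q0 := star x ⬝ᵥ N *ᵥ x with hq0
  set q1 := star x ⬝ᵥ F *ᵥ x with hq1
  set q2 := star x ⬝ᵥ H *ᵥ x with hq2
  have key : ∀ t : ℝ, 0 < t → 0 ≤ q0 + (t:ℂ) * q1 + ((t:ℂ)^2) * q2 := by
    intro t ht
    have := h t ht x
    simpa [add_mulVec, smul_mulVec, dotProduct_add, dotProduct_smul, smul_eq_mul,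
      hq0, hq1, hq2, mul_assoc] using this
  have kre : ∀ t : ℝ, 0 < t → 0 ≤ q0.re + t * q1.re + t^2 * q2.re := by
    intro t ht
    have := (Complex.nonneg_iff.mp (key t ht)).1
    simpa [Complex.add_re, Complex.mul_re, Complex.ofReal_re, Complex.ofReal_im,
      pow_two, Complex.mul_im] using this
  have kim : ∀ t : ℝ, 0 < t → q0.im + t * q1.im + t^2 * q2.im = 0 := by
    intro t ht
    have := (Complex.nonneg_iff.mp (key t ht)).2
    have := this.symm
    simpa [Complex.add_im, Complex.mul_im, Complex.ofReal_re, Complex.ofReal_im,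
      pow_two, Complex.mul_re] using this
  rw [Complex.nonneg_iff]
  constructor
  · -- real part
    by_contra hneg
    push_neg at hneg
    set a := q1.re; set b := q2.re
    have hb : ∀ t : ℝ, 0 < t → 0 ≤ q0.re + t * a + t^2 * b := kre
    set t := min 1 (-q0.re / (|a| + |b| + 1)) with htdef
    have hq0neg : q0.re < 0 := hneg
    have hpos : 0 < -q0.re / (|a| + |b| + 1) := div_pos (by linarith) (by positivity)
    have ht : 0 < t := lt_min one_pos hpos
    have ht1 : t ≤ 1 := min_le_left _ _
    have ht2 : t ≤ -q0.re / (|a| + |b| + 1) := min_le_right _ _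
    have habs : 0 < |a| + |b| + 1 := by positivity
    have ht2' : t * (|a| + |b| + 1) ≤ -q0.re := by
      rw [div_eq_mul_inv] at ht2
      calc t * (|a| + |b| + 1) ≤ (-q0.re * (|a| + |b| + 1)⁻¹) * (|a| + |b| + 1) := by
            apply mul_le_mul_of_nonneg_right ht2 (le_of_lt habs)
        _ = -q0.re := by field_simp
    have := hb t ht
    have hta : t * a ≤ t * |a| := mul_le_mul_of_nonneg_left (le_abs_self a) ht.le
    have htb : t^2 * b ≤ t^2 * |b| := by
      apply mul_le_mul_of_nonneg_left (le_abs_self b); positivity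
    have htt : t^2 * |b| ≤ t * |b| := by
      have : t^2 ≤ t := by nlinarith
      exact mul_le_mul_of_nonneg_right this (abs_nonneg b)
    nlinarith
  · -- imaginary part: vanishing polynomial at t = 1, 2, 3
    have e1 := kim 1 one_pos
    have e2 := kim 2 two_pos
    have e3 := kim 3 three_pos
    norm_num at e1 e2 e3
    linarith
-- lemmas about ampP, to be appended after defs
open scoped ComplexOrder TensorProduct
open Matrix

section AmpLemmas
variable {S : Type} [AddCommGroup S] [Module ℂ S] {k : ℕ} {ι : Type} [Fintype ι] [DecidableEq ι]

lemma ampP_add (φ φ' : S →ₗ[ℂ] Matrix ι ι ℂ) (M : Matrix (Fin k) (Fin k) S) :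
    ampP (φ + φ') M = ampP φ M + ampP φ' M := by
  ext ⟨i, p⟩ ⟨j, q⟩; simp [ampP]

lemma ampP_smulmap (c : ℂ) (φ : S →ₗ[ℂ] Matrix ι ι ℂ)
    (M : Matrix (Fin k) (Fin k) S) : ampP (c • φ) M = c • ampP φ M := by
  ext ⟨i, p⟩ ⟨j, q⟩; simp [ampP]

lemma ampP_congr (φ φ' : S →ₗ[ℂ] Matrix ι ι ℂ) (h : ∀ x, φ x = φ' x)
    (M : Matrix (Fin k) (Fin k) S) : ampP φ M = ampP φ' M := by
  ext ⟨i, p⟩ ⟨j, q⟩; simp [ampP, h]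

/-- `1 ⊗ X` as a scalar matrix on the product index. -/
def oneKron (k : ℕ) {ι : Type} (X : Matrix ι ι ℂ) :
    Matrix (Fin k × ι) (Fin k × ι) ℂ :=
  Matrix.of fun a b => (if a.1 = b.1 then X a.2 b.2 else 0)

lemma ampP_conj (φ₁ φ₂ : S →ₗ[ℂ] Matrix ι ι ℂ)
    (X : Matrix ι ι ℂ) (hc : ∀ x, φ₂ x = Xᴴ * φ₁ x * X)
    (M : Matrix (Fin k) (Fin k) S) :
    ampP φ₂ M = (oneKron k X)ᴴ * ampP φ₁ M * oneKron k X := by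
  ext ⟨i, p⟩ ⟨j, q⟩
  simp only [ampP, Matrix.of_apply, hc, Matrix.mul_apply, oneKron, conjTranspose_apply,
    Fintype.sum_prod_type]
  simp [Finset.mul_sum, Finset.sum_mul, apply_ite, mul_ite, ite_mul]

end AmpLemmas
section TpLemmas
open scoped ComplexOrder TensorProduct
open Matrix
variable {V W : Type} [AddCommGroup V] [Module ℂ V] [AddCommGroup W] [Module ℂ W]
variable {n m : ℕ}

lemma tpmap_tmul (φ : V →ₗ[ℂ] Matrix (Fin n) (Fin n) ℂ)
    (ψ : W →ₗ[ℂ] Matrix (Fin m) (Fin m) ℂ) (x : V) (y : W) :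
    tpmap φ ψ (x ⊗ₜ[ℂ] y) = entryBil n m (φ x) (ψ y) := by
  simp [tpmap]

lemma entryBil_mul (A A' : Matrix (Fin n) (Fin n) ℂ) (B B' : Matrix (Fin m) (Fin m) ℂ) :
    entryBil n m (A * A') (B * B') = entryBil n m A B * entryBil n m A' B' := by
  ext ⟨p1, p2⟩ ⟨q1, q2⟩
  simp only [entryBil, LinearMap.mk₂_apply, Matrix.of_apply, Matrix.mul_apply,
    Fintype.sum_prod_type]
  rw [Finset.sum_mul_sum]
  apply Finset.sum_congr rfl; intro u _
  apply Finset.sum_congr rfl; intro v _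
  ring

lemma entryBil_ct (A : Matrix (Fin n) (Fin n) ℂ) (B : Matrix (Fin m) (Fin m) ℂ) :
    (entryBil n m A B)ᴴ = entryBil n m Aᴴ Bᴴ := by
  ext ⟨p1, p2⟩ ⟨q1, q2⟩
  simp [entryBil, conjTranspose_apply, _root_.map_mul]

lemma tpmap_conj (φ₁ φ₂ : V →ₗ[ℂ] Matrix (Fin n) (Fin n) ℂ)
    (ψ₁ ψ₂ : W →ₗ[ℂ] Matrix (Fin m) (Fin m) ℂ)
    (A : Matrix (Fin n) (Fin n) ℂ) (B : Matrix (Fin m) (Fin m) ℂ)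
    (hφ : ∀ x, φ₂ x = Aᴴ * φ₁ x * A) (hψ : ∀ y, ψ₂ y = Bᴴ * ψ₁ y * B)
    (z : V ⊗[ℂ] W) :
    tpmap φ₂ ψ₂ z = (entryBil n m A B)ᴴ * tpmap φ₁ ψ₁ z * entryBil n m A B := by
  induction z using TensorProduct.induction_on with
  | zero => simp
  | tmul x y =>
      rw [tpmap_tmul, tpmap_tmul, hφ, hψ, entryBil_ct]
      rw [show Aᴴ * φ₁ x * A = Aᴴ * (φ₁ x) * A from rfl]
      rw [← entryBil_mul, ← entryBil_mul]
  | add z1 z2 ih1 ih2 => simp [map_add, ih1, ih2, Matrix.mul_add, Matrix.add_mul]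

lemma tpmap_expand (φ f : V →ₗ[ℂ] Matrix (Fin n) (Fin n) ℂ)
    (ψ g : W →ₗ[ℂ] Matrix (Fin m) (Fin m) ℂ) (c d : ℂ) (z : V ⊗[ℂ] W) :
    tpmap (φ + c • f) (ψ + d • g) z
      = tpmap φ ψ z + d • tpmap φ g z + c • tpmap f ψ z + (c * d) • tpmap f g z := by
  induction z using TensorProduct.induction_on with
  | zero => simp
  | tmul x y =>
      simp only [tpmap_tmul, LinearMap.add_apply, LinearMap.smul_apply, map_add, _root_.map_smul,
        LinearMap.map_smul₂, LinearMap.add_apply]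
      ext ⟨p1, p2⟩ ⟨q1, q2⟩
      simp [entryBil, Matrix.add_apply, Matrix.smul_apply, smul_eq_mul]
      ring
  | add z1 z2 ih1 ih2 =>
      simp only [map_add, ih1, ih2, smul_add]
      abel

lemma tpmap_zero_left (φ : V →ₗ[ℂ] Matrix (Fin n) (Fin n) ℂ)
    (ψ : W →ₗ[ℂ] Matrix (Fin m) (Fin m) ℂ) (hφ : ∀ x, φ x = 0) (z : V ⊗[ℂ] W) :
    tpmap φ ψ z = 0 := by
  induction z using TensorProduct.induction_on with
  | zero => simp
  | tmul x y => rw [tpmap_tmul, hφ]; simp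
  | add z1 z2 ih1 ih2 => simp [map_add, ih1, ih2]

lemma tpmap_zero_right (φ : V →ₗ[ℂ] Matrix (Fin n) (Fin n) ℂ)
    (ψ : W →ₗ[ℂ] Matrix (Fin m) (Fin m) ℂ) (hψ : ∀ y, ψ y = 0) (z : V ⊗[ℂ] W) :
    tpmap φ ψ z = 0 := by
  induction z using TensorProduct.induction_on with
  | zero => simp
  | tmul x y => rw [tpmap_tmul, hψ]; simp
  | add z1 z2 ih1 ih2 => simp [map_add, ih1, ih2]

end TpLemmas
section TraceMap
open scoped ComplexOrder TensorProduct
open Matrix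
variable {V : Type} [AddCommGroup V] [Module ℂ V]

/-- The map `x ↦ tr (φ x) • 1`. -/
noncomputable def trOne {n : ℕ} (φ : V →ₗ[ℂ] Matrix (Fin n) (Fin n) ℂ) :
    V →ₗ[ℂ] Matrix (Fin n) (Fin n) ℂ :=
  ((Matrix.traceLinearMap (Fin n) ℂ ℂ).comp φ).smulRight (1 : Matrix (Fin n) (Fin n) ℂ)

lemma trOne_apply {n : ℕ} (φ : V →ₗ[ℂ] Matrix (Fin n) (Fin n) ℂ) (x : V) :
    trOne φ x = (Matrix.trace (φ x)) • 1 := rfl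

private lemma sum_swap4 {A B C D M : Type} [Fintype A] [Fintype B] [Fintype C] [Fintype D]
    [AddCommMonoid M] (f : A → B → C → D → M) :
    ∑ a, ∑ b, ∑ c, ∑ d, f a b c d = ∑ b, ∑ d, ∑ a, ∑ c, f a b c d := by
  rw [Finset.sum_comm]
  refine Finset.sum_congr rfl fun b _ => ?_
  calc ∑ a : A, ∑ c : C, ∑ d : D, f a b c d
      = ∑ a : A, ∑ d : D, ∑ c : C, f a b c d :=
        Finset.sum_congr rfl fun a _ => Finset.sum_comm
    _ = ∑ d : D, ∑ a : A, ∑ c : C, f a b c d := Finset.sum_comm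

private lemma sumCollapseAux {N K : Type} [Fintype N] [Fintype K] [DecidableEq N]
    (g : N → K → ℂ) (r : N) :
    (∑ q1 : N, ∑ j : K, if q1 = r then g q1 j else 0) = ∑ j : K, g r j := by
  rw [Finset.sum_comm]
  simp

lemma trOne_dot {k n : ℕ} (φ : V →ₗ[ℂ] Matrix (Fin n) (Fin n) ℂ)
    (M : Matrix (Fin k) (Fin k) V) (x : Fin k × Fin n → ℂ) :
    star x ⬝ᵥ (ampP (trOne φ) M) *ᵥ x
      = ∑ p : Fin n, ∑ r : Fin n,
          star (fun jq : Fin k × Fin n => if jq.2 = r then x (jq.1, p) else 0) ⬝ᵥ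
            (ampP φ M) *ᵥ (fun jq : Fin k × Fin n => if jq.2 = r then x (jq.1, p) else 0) := by
  simp only [dotProduct, Matrix.mulVec, ampP, trOne_apply, Matrix.of_apply,
    Fintype.sum_prod_type, Matrix.smul_apply, Matrix.one_apply, smul_eq_mul,
    Matrix.trace, Matrix.diag, Pi.star_apply, apply_ite (starRingEnd ℂ), star_zero, mul_ite, ite_mul,
    mul_zero, zero_mul, Finset.mul_sum, Finset.sum_mul, Finset.sum_ite_eq,
    Finset.sum_ite_eq', Finset.mem_univ, if_true, Complex.star_def, _root_.map_zero]
  rw [sum_swap4 (fun (i : Fin k) (p : Fin n) (j : Fin k) (r : Fin n) =>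
    (starRingEnd ℂ) (x (i, p)) * (φ (M i j) r r * 1 * x (j, p)))]
  refine Finset.sum_congr rfl fun p _ => ?_
  refine Finset.sum_congr rfl fun r _ => ?_
  refine Finset.sum_congr rfl fun i _ => ?_
  rw [sumCollapseAux]
  refine Finset.sum_congr rfl fun j _ => ?_
  ring
end TraceMap
section OpSysLemmas
open scoped ComplexOrder TensorProduct
open Matrix

variable {Γ : Type} {V : Type} [AddCommGroup V] [Module ℂ V] [StarAddMonoid V] [StarModule ℂ V]

lemma diagE_mem (Sv : LocalOpSys Γ V) (α : Γ) : diagE Sv.e 1 ∈ Sv.C α 1 := by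
  have hstar : star (diagE Sv.e 1) = diagE Sv.e 1 := by
    ext i j
    fin_cases i; fin_cases j
    simp [diagE, Matrix.star_apply, Matrix.diagonal_apply, Sv.eherm]
  obtain ⟨r, hr, hmem⟩ := Sv.unit α 1 (-(diagE Sv.e 1)) (by rw [star_neg, hstar])
  have h2 : (r : ℂ) • diagE Sv.e 1 - (-(diagE Sv.e 1)) = ((r + 1 : ℝ) : ℂ) • diagE Sv.e 1 := by
    push_cast
    module
  rw [h2] at hmem
  have h3 := (Sv.cone α 1).2.2 ((r + 1)⁻¹) (by positivity) _ hmem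
  rw [smul_smul, ← Complex.ofReal_mul, inv_mul_cancel₀ (by positivity), Complex.ofReal_one,
    one_smul] at h3
  exact h3

lemma amp1_psd {n : ℕ} {φ : V →ₗ[ℂ] Matrix (Fin n) (Fin n) ℂ} {M : Matrix (Fin 1) (Fin 1) V}
    (h : (ampP φ M).PosSemidef) : (φ (M 0 0)).PosSemidef := by
  apply psd_of_dot
  intro x
  have := h.dotProduct_mulVec_nonneg (fun a => x a.2)
  simpa [ampP, dotProduct, Matrix.mulVec, Fintype.sum_prod_type,
    Fin.sum_univ_one] using this

lemma phi_e_psd {n : ℕ} (Sv : LocalOpSys Γ V) (φ : V →ₗ[ℂ] Matrix (Fin n) (Fin n) ℂ) (α : Γ)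
    (hφ : ∀ (k : ℕ) (M : Matrix (Fin k) (Fin k) V), M ∈ Sv.C α k → (ampP φ M).PosSemidef) :
    (φ Sv.e).PosSemidef := by
  have := amp1_psd (hφ 1 (diagE Sv.e 1) (diagE_mem Sv α))
  simpa [diagE] using this

lemma phi_vanish {n : ℕ} (Sv : LocalOpSys Γ V) (φ : V →ₗ[ℂ] Matrix (Fin n) (Fin n) ℂ) (α : Γ)
    (hφ : ∀ (k : ℕ) (M : Matrix (Fin k) (Fin k) V), M ∈ Sv.C α k → (ampP φ M).PosSemidef)
    (h0 : φ Sv.e = 0) : ∀ x, φ x = 0 := by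
  have key : ∀ x, star x = x → φ x = 0 := by
    intro x hx
    set A : Matrix (Fin 1) (Fin 1) V := Matrix.of fun _ _ => x with hA
    have hAstar : star A = A := by
      ext i j; simp [hA, Matrix.star_apply, hx]
    obtain ⟨r, hr, hm⟩ := Sv.unit α 1 A hAstar
    obtain ⟨r', hr', hm'⟩ := Sv.unit α 1 (-A) (by rw [star_neg, hAstar])
    have p1 := hφ 1 _ hm
    have p2 := hφ 1 _ hm'
    have e1 : ampP φ ((r : ℂ) • diagE Sv.e 1 - A) = -(ampP φ A) := by
      ext ⟨i, p⟩ ⟨j, q⟩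
      have hij : i = j := Subsingleton.elim i j
      subst hij
      simp [ampP, diagE, Matrix.sub_apply, Matrix.smul_apply, Matrix.diagonal_apply_eq,
        map_sub, _root_.map_smul, h0]
    have e2 : ampP φ ((r' : ℂ) • diagE Sv.e 1 - (-A)) = ampP φ A := by
      ext ⟨i, p⟩ ⟨j, q⟩
      have hij : i = j := Subsingleton.elim i j
      subst hij
      simp [ampP, diagE, Matrix.sub_apply, Matrix.smul_apply, Matrix.diagonal_apply_eq,
        map_sub, _root_.map_smul, h0]
    rw [e1] at p1
    rw [e2] at p2
    have hz : ampP φ A = 0 := psd_neg_zero p2 p1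
    ext p q
    have := congrFun (congrFun hz ((0 : Fin 1), p)) ((0 : Fin 1), q)
    simpa [ampP, hA] using this
  intro x
  have hh := key ((1/2 : ℂ) • (x + star x)) (by
    rw [star_smul, star_add, star_star]
    simp [add_comm])
  have hk := key ((Complex.I/2) • (star x - x)) (by
    rw [star_smul, star_sub, star_star]
    have : star (Complex.I / 2) = -(Complex.I/2) := by
      simp [Complex.star_def, map_div₀, Complex.conj_I]
      ring
    rw [this]
    module)
  have hxdec : x = (1/2 : ℂ) • (x + star x) + Complex.I • ((Complex.I/2) • (star x - x)) := by
    rw [smul_smul]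
    have h2 : Complex.I * (Complex.I / 2) = -(1/2 : ℂ) := by
      rw [show Complex.I * (Complex.I / 2) = Complex.I * Complex.I / 2 from by ring,
        Complex.I_mul_I]
      norm_num
    rw [h2]
    module
  calc φ x = φ ((1/2 : ℂ) • (x + star x)) + Complex.I • φ ((Complex.I/2) • (star x - x)) := by
        conv_lhs => rw [hxdec]
        rw [map_add, φ.map_smul Complex.I ((Complex.I/2) • (star x - x))]
    _ = 0 := by rw [hh, hk]; simp

lemma trace_pos_of_psd_ne {n : ℕ} {F : Matrix (Fin n) (Fin n) ℂ} (hF : F.PosSemidef)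
    (hne : F ≠ 0) : 0 < F.trace.re ∧ F.trace.im = 0 := by
  have hdiag : ∀ i, 0 ≤ F i i := by
    intro i
    have := hF.dotProduct_mulVec_nonneg (Pi.single i 1)
    rwa [dot_single] at this
  have htr : 0 ≤ F.trace := by
    rw [Matrix.trace]
    exact Finset.sum_nonneg fun i _ => hdiag i
  have hne' : F.trace ≠ 0 := fun h => hne (psd_trace_zero hF h)
  obtain ⟨h1, h2⟩ := Complex.nonneg_iff.mp htr
  refine ⟨lt_of_le_of_ne h1 ?_, h2.symm⟩
  intro h
  apply hne'
  apply Complex.ext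
  · exact h.symm
  · exact h2.symm

end OpSysLemmas
section Unitalize
open scoped ComplexOrder TensorProduct
open Matrix

variable {Γ : Type} {V : Type} [AddCommGroup V] [Module ℂ V] [StarAddMonoid V] [StarModule ℂ V]

/-- Conjugation of a matrix-valued map by a scalar matrix. -/
noncomputable def conjMap {n : ℕ} (X : Matrix (Fin n) (Fin n) ℂ)
    (φ : V →ₗ[ℂ] Matrix (Fin n) (Fin n) ℂ) : V →ₗ[ℂ] Matrix (Fin n) (Fin n) ℂ where
  toFun v := Xᴴ * φ v * X
  map_add' a b := by simp [Matrix.add_mul, Matrix.mul_add]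
  map_smul' c a := by simp [Matrix.mul_smul, Matrix.smul_mul]

open scoped MatrixOrder in
lemma unitalize {n : ℕ} (Sv : LocalOpSys Γ V) (φ : V →ₗ[ℂ] Matrix (Fin n) (Fin n) ℂ) (α : Γ)
    (hφ : ∀ (k : ℕ) (M : Matrix (Fin k) (Fin k) V), M ∈ Sv.C α k → (ampP φ M).PosSemidef)
    (hne : φ Sv.e ≠ 0) (t : ℝ) (ht : 0 < t) :
    ∃ (φt : V →ₗ[ℂ] Matrix (Fin n) (Fin n) ℂ) (A : Matrix (Fin n) (Fin n) ℂ),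
      φt Sv.e = 1 ∧
      (∀ (k : ℕ) (M : Matrix (Fin k) (Fin k) V), M ∈ Sv.C α k → (ampP φt M).PosSemidef) ∧
      (∀ x, (φ + (t : ℂ) • trOne φ) x = Aᴴ * φt x * A) := by
  have hFe : (φ Sv.e).PosSemidef := phi_e_psd Sv φ α hφ
  obtain ⟨hcr, him⟩ := trace_pos_of_psd_ne hFe hne
  set cR := (φ Sv.e).trace.re with hcR
  have htrace : (φ Sv.e).trace = ((cR : ℝ) : ℂ) := by
    apply Complex.ext <;> simp [hcR, him]
  set φ' := φ + (t : ℂ) • trOne φ with hφ'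
  -- CP of φ'
  have hCP' : ∀ (k : ℕ) (M : Matrix (Fin k) (Fin k) V), M ∈ Sv.C α k →
      (ampP φ' M).PosSemidef := by
    intro k M hM
    apply psd_of_dot
    intro y
    rw [hφ', ampP_add, ampP_smulmap, add_mulVec, smul_mulVec, dotProduct_add,
      dotProduct_smul, smul_eq_mul]
    apply add_nonneg ((hφ k M hM).dotProduct_mulVec_nonneg y)
    apply mul_nonneg (Complex.zero_le_real.mpr ht.le)
    rw [trOne_dot]
    apply Finset.sum_nonneg; intro p _
    apply Finset.sum_nonneg; intro r _
    exact (hφ k M hM).dotProduct_mulVec_nonneg _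
  -- positive definiteness of φ' e
  have hsone : trOne φ Sv.e = ((cR : ℝ) : ℂ) • 1 := by rw [trOne_apply, htrace]
  have hdiagform : ((t * cR : ℝ) : ℂ) • (1 : Matrix (Fin n) (Fin n) ℂ)
      = Matrix.diagonal (fun _ => ((t * cR : ℝ) : ℂ)) := by
    ext i j
    by_cases h : i = j
    · subst h; simp [Matrix.smul_apply, Matrix.one_apply_eq, Matrix.diagonal_apply_eq]
    · simp [Matrix.smul_apply, Matrix.one_apply_ne h, Matrix.diagonal_apply_ne _ h]
  have hReq : φ' Sv.e = φ Sv.e + Matrix.diagonal (fun _ => ((t * cR : ℝ) : ℂ)) := by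
    rw [hφ']
    simp only [LinearMap.add_apply, LinearMap.smul_apply, hsone]
    rw [← hdiagform, smul_smul, ← Complex.ofReal_mul]
  have hR : (φ' Sv.e).PosDef := by
    rw [hReq]
    exact Matrix.PosDef.posSemidef_add hFe
      (Matrix.PosDef.diagonal fun _ => Complex.zero_lt_real.mpr (by positivity))
  -- square root
  set A := CFC.sqrt (φ' Sv.e) with hAdef
  have hAH : Aᴴ = A := (CFC.sqrt_nonneg (φ' Sv.e)).posSemidef.1
  have hAA : A * A = φ' Sv.e := CFC.sqrt_mul_sqrt_self (φ' Sv.e) hR.posSemidef.nonneg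
  have hdet : IsUnit A.det := by
    rw [isUnit_iff_ne_zero]
    intro h
    have : (φ' Sv.e).det = 0 := by rw [← hAA, Matrix.det_mul, h, mul_zero]
    exact absurd this (ne_of_gt hR.det_pos)
  set X := A⁻¹ with hXdef
  have hXH : Xᴴ = X := Matrix.IsHermitian.inv hAH
  refine ⟨conjMap X φ', A, ?_, ?_, ?_⟩
  · -- unital
    show Xᴴ * φ' Sv.e * X = 1
    rw [hXH, ← hAA, hXdef]
    rw [Matrix.mul_assoc, Matrix.mul_assoc, Matrix.mul_nonsing_inv _ hdet, Matrix.mul_one,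
      Matrix.nonsing_inv_mul _ hdet]
  · -- CP
    intro k M hM
    rw [ampP_conj φ' (conjMap X φ') X (fun x => rfl) M]
    exact (hCP' k M hM).conjTranspose_mul_mul_same _
  · -- back conjugation
    intro x
    show φ' x = Aᴴ * (Xᴴ * φ' x * X) * A
    rw [hXH, hAH, hXdef]
    have : A * (A⁻¹ * φ' x * A⁻¹) * A = (A * A⁻¹) * φ' x * (A⁻¹ * A) := by
      noncomm_ring
    rw [this, Matrix.mul_nonsing_inv _ hdet, Matrix.nonsing_inv_mul _ hdet, Matrix.one_mul,
      Matrix.mul_one]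

end Unitalize
/-- for any local operator system tensor product structure `τ` on
`V ⊗ W`, the tensor of (not necessarily unital) local completely positive maps into
matrix algebras is local completely positive on `V ⊗_τ W`. -/
theorem statement17 {Γ Λ V W : Type} [AddCommGroup V] [Module ℂ V] [StarAddMonoid V]
    [StarModule ℂ V] [AddCommGroup W] [Module ℂ W] [StarAddMonoid W] [StarModule ℂ W]
    (Sv : LocalOpSys Γ V) (Sw : LocalOpSys Λ W)
    (T : Γ × Λ → (n : ℕ) → Set (Matrix (Fin n) (Fin n) (V ⊗[ℂ] W)))
    (hTcone : ∀ γ n, IsVCone (T γ n))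
    (hTcompat : ∀ (γ : Γ × Λ) (n m : ℕ) (X : Matrix (Fin n) (Fin m) ℂ),
      ∀ M ∈ T γ n, sconj X M ∈ T γ m)
    (hT2 : ∀ (α : Γ) (β : Λ) (k l : ℕ), ∀ P ∈ Sv.C α k, ∀ Q ∈ Sw.C β l,
      kron P Q ∈ T (α, β) (k * l))
    (hT3 : ∀ (α : Γ) (β : Λ) (n' m' : ℕ)
      (φ1 : V →ₗ[ℂ] Matrix (Fin n') (Fin n') ℂ)
      (ψ1 : W →ₗ[ℂ] Matrix (Fin m') (Fin m') ℂ),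
      φ1 Sv.e = 1 → ψ1 Sw.e = 1 →
      (∀ (k : ℕ) (M : Matrix (Fin k) (Fin k) V),
        M ∈ Sv.C α k → (ampP φ1 M).PosSemidef) →
      (∀ (k : ℕ) (M : Matrix (Fin k) (Fin k) W),
        M ∈ Sw.C β k → (ampP ψ1 M).PosSemidef) →
      ∀ (k : ℕ) (M : Matrix (Fin k) (Fin k) (V ⊗[ℂ] W)), M ∈ T (α, β) k →
        (ampP (tpmap φ1 ψ1) M).PosSemidef)
    {n m : ℕ} (φ : V →ₗ[ℂ] Matrix (Fin n) (Fin n) ℂ)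
    (ψ : W →ₗ[ℂ] Matrix (Fin m) (Fin m) ℂ) (α : Γ) (β : Λ)
    (hφ : ∀ (k : ℕ) (M : Matrix (Fin k) (Fin k) V),
      M ∈ Sv.C α k → (ampP φ M).PosSemidef)
    (hψ : ∀ (k : ℕ) (M : Matrix (Fin k) (Fin k) W),
      M ∈ Sw.C β k → (ampP ψ M).PosSemidef) :
    ∀ (k : ℕ) (M : Matrix (Fin k) (Fin k) (V ⊗[ℂ] W)), M ∈ T (α, β) k →
      (ampP (tpmap φ ψ) M).PosSemidef := by

  intro k M hM
  by_cases hφe : φ Sv.e = 0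
  · have hvan := phi_vanish Sv φ α hφ hφe
    have hz : ampP (tpmap φ ψ) M = 0 := by
      ext ⟨i, a⟩ ⟨j, b⟩
      simp [ampP, tpmap_zero_left φ ψ hvan]
    rw [hz]
    exact Matrix.PosSemidef.zero
  by_cases hψe : ψ Sw.e = 0
  · have hvan := phi_vanish Sw ψ β hψ hψe
    have hz : ampP (tpmap φ ψ) M = 0 := by
      ext ⟨i, a⟩ ⟨j, b⟩
      simp [ampP, tpmap_zero_right φ ψ hvan]
    rw [hz]
    exact Matrix.PosSemidef.zero
  apply psd_of_dot
  apply psd_limit (F := ampP (tpmap (trOne φ) ψ) M + ampP (tpmap φ (trOne ψ)) M)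
    (H := ampP (tpmap (trOne φ) (trOne ψ)) M)
  intro t ht x
  obtain ⟨φt, A, hφt1, hφtCP, hφback⟩ := unitalize Sv φ α hφ hφe t ht
  obtain ⟨ψt, B, hψt1, hψtCP, hψback⟩ := unitalize Sw ψ β hψ hψe t ht
  have PSD1 := hT3 α β n m φt ψt hφt1 hψt1 hφtCP hψtCP k M hM
  have htp := tpmap_conj φt (φ + (t : ℂ) • trOne φ) ψt (ψ + (t : ℂ) • trOne ψ) A B
    hφback hψback
  have hampeq := ampP_conj (tpmap φt ψt)
    (tpmap (φ + (t : ℂ) • trOne φ) (ψ + (t : ℂ) • trOne ψ)) (entryBil n m A B) htp M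
  have PSD2 : (ampP (tpmap (φ + (t : ℂ) • trOne φ) (ψ + (t : ℂ) • trOne ψ)) M).PosSemidef := by
    rw [hampeq]
    exact PSD1.conjTranspose_mul_mul_same _
  have hmat : ampP (tpmap φ ψ) M
      + (t : ℂ) • (ampP (tpmap (trOne φ) ψ) M + ampP (tpmap φ (trOne ψ)) M)
      + ((t : ℂ) ^ 2) • ampP (tpmap (trOne φ) (trOne ψ)) M
      = ampP (tpmap (φ + (t : ℂ) • trOne φ) (ψ + (t : ℂ) • trOne ψ)) M := by
    ext ⟨i, a⟩ ⟨j, b⟩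
    simp only [ampP, Matrix.of_apply, Matrix.add_apply, Matrix.smul_apply,
      tpmap_expand φ (trOne φ) ψ (trOne ψ) (t : ℂ) (t : ℂ) (M i j), smul_eq_mul, pow_two]
    ring
  rw [hmat]
  exact PSD2.dotProduct_mulVec_nonneg x
end

section
/- Let V and W be local operator systems with cone families {C_α^n} and {D_β^n}. Suppose {T_γ^n : γ ∈ Ω} is any compatible collection of cones T_γ^n ⊆ M_n(V ⊗ W) (X* T_γ^m X ⊆ T_γ^n for scalar matrices X) such that for every γ there exist α, β with C_α^k ⊗ D_β^m ⊆ T_γ^{km} for all k, m. Then for each γ there exist (α, β) with K_{(α,β)}^{n(lmax)} ⊆ T_γ^n for every n, where K_{(α,β)}^{n(lmax)} = { λ (P ⊗ Q) λ* : P ∈ C_α^k, Q ∈ D_β^m, λ ∈ M_{n,km}(ℂ), k, m ∈ ℕ }. Consequently lmax is the maximal local operator system tensor product. -/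
open scoped ComplexOrder

open scoped TensorProduct

/-- Conjugation `L M Lᴴ` of a module-valued matrix by a scalar matrix `L`. -/
def oconj {M : Type} [AddCommGroup M] [Module ℂ M] {n N : ℕ}
    (L : Matrix (Fin n) (Fin N) ℂ) (A : Matrix (Fin N) (Fin N) M) :
    Matrix (Fin n) (Fin n) M :=
  Matrix.of fun i j => ∑ p, ∑ q, (L i p * (starRingEnd ℂ) (L j q)) • A p q

/-- any compatible cone family on `V ⊗ W` containing the tensors of the
cones contains the maximal cones `K^{n(lmax)}_{(α,β)}`; hence lmax is the maximal
local operator system tensor product. -/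
theorem statement19 {Γ Λ Ω V W : Type} [AddCommGroup V] [Module ℂ V] [StarAddMonoid V]
    [StarModule ℂ V] [AddCommGroup W] [Module ℂ W] [StarAddMonoid W] [StarModule ℂ W]
    (Sv : LMOrder Γ V) (Sw : LMOrder Λ W)
    (T : Ω → (n : ℕ) → Set (Matrix (Fin n) (Fin n) (V ⊗[ℂ] W)))
    (hTcone : ∀ γ n, IsVCone (T γ n))
    (hTcompat : ∀ (γ : Ω) (n m : ℕ) (X : Matrix (Fin n) (Fin m) ℂ),
      ∀ M ∈ T γ n, sconj X M ∈ T γ m)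
    (hT2 : ∀ γ : Ω, ∃ (α : Γ) (β : Λ), ∀ (k l : ℕ), ∀ P ∈ Sv.C α k, ∀ Q ∈ Sw.C β l,
      kron P Q ∈ T γ (k * l)) :
    ∀ γ : Ω, ∃ (α : Γ) (β : Λ), ∀ (n : ℕ)
      (M : Matrix (Fin n) (Fin n) (V ⊗[ℂ] W)),
      (∃ (k l : ℕ) (P : Matrix (Fin k) (Fin k) V) (Q : Matrix (Fin l) (Fin l) W)
        (L : Matrix (Fin n) (Fin (k * l)) ℂ),
        P ∈ Sv.C α k ∧ Q ∈ Sw.C β l ∧ M = oconj L (kron P Q)) →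
      M ∈ T γ n := by
  intro γ
  obtain ⟨α, β, h⟩ := hT2 γ
  refine ⟨α, β, fun n M hM => ?_⟩
  obtain ⟨k, l, P, Q, L, hP, hQ, rfl⟩ := hM
  have hk : kron P Q ∈ T γ (k * l) := h k l P hP Q hQ
  have := hTcompat γ (k * l) n (L.conjTranspose) _ hk
  convert this using 1
  ext i j
  simp [oconj, sconj, Matrix.conjTranspose_apply, mul_comm]
end
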